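/- Let 𝕂 be a field and w, g, h ∈ GL(d, 𝕂). For any N ∈ ℕ, the Zariski closure of the set {w gⁿ hⁿ : n ≥ N} contains the product w g h. Concretely: if p is a polynomial in the matrix entries with p(w gⁿ hⁿ) = 0 for all n ≥ N, then p(w g h) = 0. -/

import Mathlib

open MvPolynomial

namespace Stmt3Aux

variable {𝕂 : Type*} [Field 𝕂] {d : ℕ}

/-- The matrix of variables. -/
noncomputable def Xmat (𝕂 : Type*) [Field 𝕂] (d : ℕ) :
    Matrix (Fin d) (Fin d) (MvPolynomial (Fin d × Fin d) 𝕂) :=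
  Matrix.of fun i j => X (i, j)

/-- Constant-coefficient matrix. -/
noncomputable def cmat (A : Matrix (Fin d) (Fin d) 𝕂) :
    Matrix (Fin d) (Fin d) (MvPolynomial (Fin d × Fin d) 𝕂) :=
  A.map C

/-- Substitution `p(X) ↦ p(A X B)`. -/
noncomputable def T (A B : Matrix (Fin d) (Fin d) 𝕂) :
    MvPolynomial (Fin d × Fin d) 𝕂 →ₐ[𝕂] MvPolynomial (Fin d × Fin d) 𝕂 :=
  aeval fun ij => (cmat A * Xmat 𝕂 d * cmat B) ij.1 ij.2

lemma mapMatrix_T (A B A' B' : Matrix (Fin d) (Fin d) 𝕂) :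
    ((T A B).toRingHom.mapMatrix (cmat A' * Xmat 𝕂 d * cmat B'))
      = cmat (A' * A) * Xmat 𝕂 d * cmat (B * B') := by
  rw [map_mul, map_mul]
  have hC : ∀ (M : Matrix (Fin d) (Fin d) 𝕂),
      (T A B).toRingHom.mapMatrix (cmat M) = cmat M := by
    intro M
    ext i j
    simp [RingHom.mapMatrix_apply, Matrix.map_apply, cmat, T, algebraMap_eq]
  have hX : (T A B).toRingHom.mapMatrix (Xmat 𝕂 d) = cmat A * Xmat 𝕂 d * cmat B := by
    ext i j
    simp [RingHom.mapMatrix_apply, Matrix.map_apply, Xmat, T]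
  rw [hC, hC, hX]
  have h1 : cmat (A' * A) = cmat A' * cmat A := by
    simp [cmat, Matrix.map_mul]
  have h2 : cmat (B * B') = cmat B * cmat B' := by
    simp [cmat, Matrix.map_mul]
  rw [h1, h2]
  noncomm_ring

lemma T_comp (A B A' B' : Matrix (Fin d) (Fin d) 𝕂) :
    (T A B).comp (T A' B') = T (A' * A) (B * B') := by
  apply MvPolynomial.algHom_ext
  intro ij
  have := congrArg (fun M => M ij.1 ij.2) (mapMatrix_T A B A' B')
  simp only [RingHom.mapMatrix_apply, Matrix.map_apply] at this
  simpa [T] using this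

lemma T_one_one : (T (1 : Matrix (Fin d) (Fin d) 𝕂) 1) = AlgHom.id 𝕂 _ := by
  apply MvPolynomial.algHom_ext
  intro ij
  have hc : cmat (1 : Matrix (Fin d) (Fin d) 𝕂) = 1 := by
    show (1 : Matrix (Fin d) (Fin d) 𝕂).map C = 1
    exact map_one (RingHom.mapMatrix (C : 𝕂 →+* MvPolynomial (Fin d × Fin d) 𝕂))
  simp [T, hc, Xmat]

lemma eval_T (A B M : Matrix (Fin d) (Fin d) 𝕂)
    (p : MvPolynomial (Fin d × Fin d) 𝕂) :
    eval (fun ij => M ij.1 ij.2) (T A B p) =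
      eval (fun ij => (A * M * B) ij.1 ij.2) p := by
  set v : Fin d × Fin d → 𝕂 := fun ij => M ij.1 ij.2 with hv
  have hmap : (eval v : MvPolynomial (Fin d × Fin d) 𝕂 →+* 𝕂).mapMatrix
      (cmat A * Xmat 𝕂 d * cmat B) = A * M * B := by
    rw [map_mul, map_mul]
    congr 1
    · congr 1
      · ext i j; simp [RingHom.mapMatrix_apply, Matrix.map_apply, cmat]
      · ext i j; simp [RingHom.mapMatrix_apply, Matrix.map_apply, Xmat, hv]
    · ext i j; simp [RingHom.mapMatrix_apply, Matrix.map_apply, cmat]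
  have hT : T A B = bind₁ fun ij => (cmat A * Xmat 𝕂 d * cmat B) ij.1 ij.2 := rfl
  rw [hT]
  have h := eval₂Hom_bind₁ (RingHom.id 𝕂) v
    (fun ij => (cmat A * Xmat 𝕂 d * cmat B) ij.1 ij.2) p
  simp only [eval] at *
  rw [h]
  refine MvPolynomial.eval₂Hom_congr rfl ?_ rfl
  funext ij
  have := congrArg (fun M => M ij.1 ij.2) hmap
  simpa [RingHom.mapMatrix_apply, Matrix.map_apply] using this

lemma totalDegree_aeval_le {σ τ : Type*} {R : Type*} [CommRing R]
    (f : σ → MvPolynomial τ R) (hf : ∀ i, (f i).totalDegree ≤ 1)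
    (p : MvPolynomial σ R) : (aeval f p).totalDegree ≤ p.totalDegree := by
  conv_lhs => rw [p.as_sum]
  rw [map_sum]
  refine (totalDegree_finset_sum _ _).trans ?_
  apply Finset.sup_le
  intro s hs
  refine le_trans ?_ (le_totalDegree hs)
  rw [aeval_monomial]
  refine (totalDegree_mul _ _).trans ?_
  have h1 : (algebraMap R (MvPolynomial τ R) (coeff s p)).totalDegree = 0 := by
    simp [algebraMap_eq]
  rw [h1, zero_add]
  refine (totalDegree_finset_prod _ _).trans ?_
  calc ∑ i ∈ s.support, (f i ^ s i).totalDegree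
      ≤ ∑ i ∈ s.support, s i := by
        apply Finset.sum_le_sum
        intro i _
        exact (totalDegree_pow _ _).trans (by
          calc s i * (f i).totalDegree ≤ s i * 1 := Nat.mul_le_mul_left _ (hf i)
          _ = s i := Nat.mul_one _)
    _ = s.sum fun _ n => n := rfl

lemma totalDegree_entry_le (A B : Matrix (Fin d) (Fin d) 𝕂) (ij : Fin d × Fin d) :
    ((cmat A * Xmat 𝕂 d * cmat B) ij.1 ij.2).totalDegree ≤ 1 := by
  rw [Matrix.mul_apply]
  refine (totalDegree_finset_sum _ _).trans (Finset.sup_le fun l _ => ?_)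
  refine (totalDegree_mul _ _).trans ?_
  have h2 : ((cmat B) l ij.2).totalDegree = 0 := by simp [cmat, Matrix.map_apply]
  rw [h2, add_zero, Matrix.mul_apply]
  refine (totalDegree_finset_sum _ _).trans (Finset.sup_le fun k _ => ?_)
  refine (totalDegree_mul _ _).trans ?_
  have h3 : ((cmat A) ij.1 k).totalDegree = 0 := by simp [cmat, Matrix.map_apply]
  rw [h3, zero_add]
  simpa [Xmat] using totalDegree_X_le ((k, l) : Fin d × Fin d)

end Stmt3Aux

open Stmt3Aux

/-- Let `𝕂` be a field and `w, g, h ∈ GL(d, 𝕂)`.  For any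
`N ∈ ℕ`, the Zariski closure of `{w gⁿ hⁿ : n ≥ N}` contains `w g h`:
concretely, if a polynomial `p` in the matrix entries vanishes on `w gⁿ hⁿ`
for all `n ≥ N`, then `p (w g h) = 0`. -/
theorem stmt3 {𝕂 : Type*} [Field 𝕂] {d : ℕ}
    (w g h : GL (Fin d) 𝕂) (N : ℕ)
    (p : MvPolynomial (Fin d × Fin d) 𝕂)
    (hp : ∀ n : ℕ, N ≤ n →
      MvPolynomial.eval
        (fun ij => (↑(w * g ^ n * h ^ n) : Matrix (Fin d) (Fin d) 𝕂) ij.1 ij.2) p = 0) :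
    MvPolynomial.eval
      (fun ij => (↑(w * g * h) : Matrix (Fin d) (Fin d) 𝕂) ij.1 ij.2) p = 0 := by
  classical
  set a : GL (Fin d) 𝕂 := w * g ^ N * w⁻¹ with ha
  set b : GL (Fin d) 𝕂 := h ^ N with hb
  -- key conjugation identity
  have keyGL : ∀ n : ℕ, a * (w * g ^ n * h ^ n) * b = w * g ^ (N + n) * h ^ (N + n) := by
    intro n
    rw [ha, hb]
    have hh : h ^ n * h ^ N = h ^ (N + n) := by rw [← pow_add, add_comm]
    calc w * g ^ N * w⁻¹ * (w * g ^ n * h ^ n) * h ^ N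
        = w * (g ^ N * g ^ n) * (h ^ n * h ^ N) := by group
      _ = w * g ^ (N + n) * h ^ (N + n) := by rw [← pow_add, hh, mul_assoc]
  have key : ∀ n : ℕ,
      (↑a : Matrix (Fin d) (Fin d) 𝕂) * (↑(w * g ^ n * h ^ n) : Matrix (Fin d) (Fin d) 𝕂) *
        (↑b : Matrix (Fin d) (Fin d) 𝕂)
        = (↑(w * g ^ (N + n) * h ^ (N + n)) : Matrix (Fin d) (Fin d) 𝕂) := by
    intro n
    rw [← Units.val_mul, ← Units.val_mul, keyGL n]
  -- injectivity of T ↑a ↑b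
  have hinj : Function.Injective (T (↑a : Matrix (Fin d) (Fin d) 𝕂) ↑b) := by
    have hcomp := T_comp (↑a⁻¹ : Matrix (Fin d) (Fin d) 𝕂) ↑b⁻¹ ↑a ↑b
    have hAA : (↑a : Matrix (Fin d) (Fin d) 𝕂) * (↑a⁻¹ : Matrix (Fin d) (Fin d) 𝕂) = 1 :=
      Units.mul_inv a
    have hBB : (↑b⁻¹ : Matrix (Fin d) (Fin d) 𝕂) * (↑b : Matrix (Fin d) (Fin d) 𝕂) = 1 :=
      Units.inv_mul b
    rw [hAA, hBB, T_one_one] at hcomp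
    intro x y hxy
    have h2 := congrArg (T (↑a⁻¹ : Matrix (Fin d) (Fin d) 𝕂) ↑b⁻¹) hxy
    rw [← AlgHom.comp_apply, ← AlgHom.comp_apply, hcomp] at h2
    simpa using h2
  set k := p.totalDegree with hk
  let E : ℕ → (MvPolynomial (Fin d × Fin d) 𝕂 →ₗ[𝕂] 𝕂) := fun n =>
    { toFun := MvPolynomial.eval
        (fun ij => (↑(w * g ^ n * h ^ n) : Matrix (Fin d) (Fin d) 𝕂) ij.1 ij.2),
      map_add' := by simp,
      map_smul' := by simp [smul_eq_mul] }
  set W : Submodule 𝕂 (MvPolynomial (Fin d × Fin d) 𝕂) :=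
    MvPolynomial.restrictTotalDegree (Fin d × Fin d) 𝕂 k ⊓
      (⨅ (n : ℕ) (_ : N ≤ n), LinearMap.ker (E n)) with hW
  have memW : ∀ q, q ∈ W ↔ q.totalDegree ≤ k ∧ ∀ n, N ≤ n → E n q = 0 := by
    intro q
    rw [hW, Submodule.mem_inf]
    constructor
    · rintro ⟨h1, h2⟩
      refine ⟨(MvPolynomial.mem_restrictTotalDegree _ _ _).mp h1, fun n hn => ?_⟩
      simp only [Submodule.mem_iInf, LinearMap.mem_ker] at h2
      exact h2 n hn
    · rintro ⟨h1, h2⟩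
      refine ⟨(MvPolynomial.mem_restrictTotalDegree _ _ _).mpr h1, ?_⟩
      simp only [Submodule.mem_iInf, LinearMap.mem_ker]
      exact fun n hn => h2 n hn
  -- T maps W to W
  have hTW : ∀ q ∈ W, T (↑a : Matrix (Fin d) (Fin d) 𝕂) ↑b q ∈ W := by
    intro q hq
    rw [memW] at hq ⊢
    obtain ⟨hq1, hq2⟩ := hq
    constructor
    · exact le_trans (totalDegree_aeval_le _ (totalDegree_entry_le _ _) q) hq1
    · intro n hn
      show MvPolynomial.eval _ (T (↑a : Matrix (Fin d) (Fin d) 𝕂) ↑b q) = 0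
      rw [eval_T, key n]
      exact hq2 (N + n) (Nat.le_add_right _ _)
  haveI : FiniteDimensional 𝕂 W :=
    Submodule.finiteDimensional_of_le (inf_le_left : W ≤ _)
  let Tres : W →ₗ[𝕂] W :=
    LinearMap.restrict (T (↑a : Matrix (Fin d) (Fin d) 𝕂) ↑b).toLinearMap hTW
  have hTresInj : Function.Injective Tres := by
    intro x y hxy
    exact Subtype.ext (hinj (congrArg Subtype.val hxy))
  have hTresSurj : Function.Surjective Tres :=
    (LinearMap.injective_iff_surjective).mp hTresInj
  have hpW : p ∈ W := by
    rw [memW]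
    exact ⟨le_refl _, fun n hn => hp n hn⟩
  obtain ⟨⟨q, hqW⟩, hq⟩ := hTresSurj ⟨p, hpW⟩
  have hTq : T (↑a : Matrix (Fin d) (Fin d) 𝕂) ↑b q = p := congrArg Subtype.val hq
  have hq2 := ((memW q).mp hqW).2
  have hwgh : (↑(w * g * h) : Matrix (Fin d) (Fin d) 𝕂) = ↑(w * g ^ 1 * h ^ 1) := by
    simp
  rw [← hTq, hwgh, eval_T, key 1]
  exact hq2 (N + 1) (Nat.le_add_right _ _)
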